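/- Let s ≥ 1 be an integer and ϱ₁, …, ϱ_s ∈ ℝ. Let Φ be the s × s real companion matrix with (Φ)_{j,j+1} = 1 for j = 1, …, s−1, last row (ϱ₁, ϱ₂, …, ϱ_s), and all other entries zero, and let Γ = (1, 0, …, 0) be the 1 × s row vector. Let M be an s × s real matrix, Q an s × 1 real column vector, and T an invertible s × s real matrix satisfying the Sylvester equation TΦ − MT = QΓ; set Ψ = ΓT⁻¹. Let u : ℝ → ℝ be s-times differentiable and satisfy u^{(s)}(t) = ϱ₁ u(t) + ϱ₂ u'(t) + ⋯ + ϱ_s u^{(s−1)}(t) for all t ∈ ℝ, and define θ(t) = T · (u(t), u'(t), …, u^{(s−1)}(t))ᵀ. Then θ is differentiable with θ'(t) = (M + QΨ) θ(t) and Ψ θ(t) = u(t) for all t ∈ ℝ. -/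

import Mathlib

/-- **Steady-state generator property (Remark 2.4).**
Let `Φ` be the `s × s` companion matrix with superdiagonal `1`s and last row
`(ϱ₁, …, ϱ_s)`, let `Γ = (1, 0, …, 0)` be a row vector, let `T` be an invertible solution
of the Sylvester equation `TΦ − MT = QΓ`, and set `Ψ = ΓT⁻¹`. If `u : ℝ → ℝ` is `s`-times
differentiable and satisfies `u^{(s)} = ϱ₁ u + ϱ₂ u' + ⋯ + ϱ_s u^{(s−1)}`, then
`θ(t) = T ⬝ (u(t), u'(t), …, u^{(s−1)}(t))ᵀ` satisfies `θ' = (M + QΨ)θ` and `Ψθ = u`. -/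
theorem steady_state_generator
    (s : ℕ) (hs : 1 ≤ s) (ϱ : Fin s → ℝ)
    (Φ : Matrix (Fin s) (Fin s) ℝ)
    (hΦ : Φ = Matrix.of fun i j : Fin s =>
      if (i : ℕ) = s - 1 then ϱ j else if (j : ℕ) = (i : ℕ) + 1 then 1 else 0)
    (Γ : Matrix (Fin 1) (Fin s) ℝ)
    (hΓ : Γ = Matrix.of fun (_ : Fin 1) (j : Fin s) => if (j : ℕ) = 0 then (1 : ℝ) else 0)
    (M : Matrix (Fin s) (Fin s) ℝ) (Q : Matrix (Fin s) (Fin 1) ℝ)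
    (T : Matrix (Fin s) (Fin s) ℝ) (hT : IsUnit T.det)
    (hSyl : T * Φ - M * T = Q * Γ)
    (Ψ : Matrix (Fin 1) (Fin s) ℝ) (hΨ : Ψ = Γ * T⁻¹)
    (u : ℝ → ℝ) (hu : ContDiff ℝ s u)
    (hode : ∀ t : ℝ, iteratedDeriv s u t = ∑ k : Fin s, ϱ k * iteratedDeriv (k : ℕ) u t)
    (θ : ℝ → Fin s → ℝ)
    (hθ : θ = fun t => T.mulVec fun k : Fin s => iteratedDeriv (k : ℕ) u t) :
    (∀ t : ℝ, HasDerivAt θ ((M + Q * Ψ).mulVec (θ t)) t) ∧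
      ∀ t : ℝ, Ψ.mulVec (θ t) 0 = u t := by
  have hinv : T⁻¹ * T = 1 := Matrix.nonsing_inv_mul T hT
  set U : ℝ → Fin s → ℝ := fun t k => iteratedDeriv (k : ℕ) u t with hU
  -- derivative of each component of U
  have hUd : ∀ (t : ℝ) (k : Fin s),
      HasDerivAt (fun t => iteratedDeriv (k : ℕ) u t) (iteratedDeriv ((k : ℕ) + 1) u t) t := by
    intro t k
    have hdiff : Differentiable ℝ (iteratedDeriv (k : ℕ) u) :=
      hu.differentiable_iteratedDeriv _ (by exact_mod_cast k.isLt)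
    have h := (hdiff t).hasDerivAt
    rw [iteratedDeriv_succ]
    exact h
  -- Φ · U t = shifted derivatives
  have hΦU : ∀ t : ℝ, Φ.mulVec (U t) = fun k : Fin s => iteratedDeriv ((k : ℕ) + 1) u t := by
    intro t; funext i
    simp only [hΦ, Matrix.mulVec, dotProduct, Matrix.of_apply]
    by_cases hi : (i : ℕ) = s - 1
    · simp only [hi, if_true]
      have h2 : s - 1 + 1 = s := by omega
      rw [h2, hode t]
    · simp only [hi, if_false]
      have hlt : (i : ℕ) + 1 < s := by have := i.isLt; omega
      have hiff : ∀ j : Fin s, ((j : ℕ) = (i : ℕ) + 1) ↔ j = ⟨(i : ℕ) + 1, hlt⟩ := by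
        intro j; rw [Fin.ext_iff]
      simp only [hiff, ite_mul, one_mul, zero_mul, Finset.sum_ite_eq', Finset.mem_univ,
        if_true]
      rfl
  -- Ψ (θ t) = Γ (U t)
  have hΨθ : ∀ t : ℝ, Ψ.mulVec (θ t) = Γ.mulVec (U t) := by
    intro t
    rw [hθ, hΨ]
    show (Γ * T⁻¹).mulVec (T.mulVec (U t)) = _
    rw [Matrix.mulVec_mulVec, Matrix.mul_assoc, hinv, Matrix.mul_one]
  have hΓU : ∀ t : ℝ, Γ.mulVec (U t) = fun _ : Fin 1 => u t := by
    intro t; funext i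
    simp only [hΓ, Matrix.mulVec, dotProduct, Matrix.of_apply]
    have hiff : ∀ j : Fin s, ((j : ℕ) = 0) ↔ j = ⟨0, hs⟩ := by
      intro j; rw [Fin.ext_iff]
    simp only [hiff, ite_mul, one_mul, zero_mul, Finset.sum_ite_eq', Finset.mem_univ, if_true]
    show iteratedDeriv 0 u t = u t
    rw [iteratedDeriv_zero]
  constructor
  · intro t
    have hder : HasDerivAt θ (T.mulVec (Φ.mulVec (U t))) t := by
      rw [hθ, hΦU t]
      apply hasDerivAt_pi.mpr
      intro i
      have : (fun x : ℝ => T.mulVec (fun k : Fin s => iteratedDeriv (k : ℕ) u x) i)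
          = fun x : ℝ => ∑ j : Fin s, T i j * iteratedDeriv (j : ℕ) u x := by
        funext x; simp [Matrix.mulVec, dotProduct]
      rw [show T.mulVec (fun k : Fin s => iteratedDeriv ((k : ℕ) + 1) u t) i
          = ∑ j : Fin s, T i j * iteratedDeriv ((j : ℕ) + 1) u t by
        simp [Matrix.mulVec, dotProduct]]
      simp only [this]
      exact HasDerivAt.fun_sum fun j _ => (hUd t j).const_mul (T i j)
    have heq : T.mulVec (Φ.mulVec (U t)) = (M + Q * Ψ).mulVec (θ t) := by
      rw [hθ]
      show T.mulVec (Φ.mulVec (U t)) = (M + Q * Ψ).mulVec (T.mulVec (U t))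
      rw [Matrix.mulVec_mulVec, Matrix.mulVec_mulVec, Matrix.add_mul,
        Matrix.mul_assoc Q Ψ T, hΨ, Matrix.mul_assoc Γ T⁻¹ T, hinv, Matrix.mul_one]
      have : T * Φ = M * T + Q * Γ := by
        have h := eq_add_of_sub_eq hSyl; rw [h, add_comm]
      rw [this]
    rwa [heq] at hder
  · intro t
    rw [hΨθ t, hΓU t]
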